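/- Sunflower lemma: any family of more than d!·k^d distinct sets, each of size at most d, contains a (k+1)-sunflower, i.e., k+1 sets whose pairwise intersections all equal a common set. -/

import Mathlib

theorem sunflower_aux {V : Type*} [DecidableEq V] (k : ℕ) (hk : 1 ≤ k) :
    ∀ d (𝒜 : Finset (Finset V)), (∀ A ∈ 𝒜, A.card ≤ d) →
    Nat.factorial d * k ^ d < 𝒜.card →
    ∃ S ⊆ 𝒜, ∃ C : Finset V, S.card = k + 1 ∧
      ∀ A ∈ S, ∀ B ∈ S, A ≠ B → A ∩ B = C := by
  intro d
  induction d with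
  | zero =>
    intro 𝒜 hsize hcard
    exfalso
    simp only [Nat.factorial_zero, pow_zero, mul_one] at hcard
    have h1 : 𝒜 ⊆ {∅} := by
      intro A hA
      simp only [Finset.mem_singleton]
      exact Finset.card_eq_zero.mp (Nat.le_zero.mp (hsize A hA))
    have := Finset.card_le_card h1
    simp at this
    omega
  | succ d ih =>
    intro 𝒜 hsize hcard
    classical
    set 𝒯 : Finset (Finset (Finset V)) :=
      𝒜.powerset.filter (fun T => ∀ A ∈ T, ∀ B ∈ T, A ≠ B → Disjoint A B) with h𝒯
    have h𝒯ne : 𝒯.Nonempty := ⟨∅, by simp [h𝒯]⟩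
    obtain ⟨T, hT𝒯, hTmax⟩ := 𝒯.exists_max_image Finset.card h𝒯ne
    rw [h𝒯, Finset.mem_filter, Finset.mem_powerset] at hT𝒯
    obtain ⟨hT𝒜, hTdisj⟩ := hT𝒯
    by_cases hbig : k + 1 ≤ T.card
    · obtain ⟨S, hST, hScard⟩ := Finset.exists_subset_card_eq hbig
      refine ⟨S, hST.trans hT𝒜, ∅, hScard, ?_⟩
      intro A hA B hB hAB
      exact Finset.disjoint_iff_inter_eq_empty.mp
        (hTdisj A (hST hA) B (hST hB) hAB)
    · push_neg at hbig
      have hTk : T.card ≤ k := by omega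
      set U : Finset V := T.sup id with hU
      -- maximality helper
      have hmaxins : ∀ A ∈ 𝒜, A ∉ T → (∀ B ∈ T, Disjoint A B) → False := by
        intro A hA hAT hdis
        have hmem : insert A T ∈ 𝒯 := by
          rw [h𝒯, Finset.mem_filter, Finset.mem_powerset]
          constructor
          · exact Finset.insert_subset hA hT𝒜
          · intro X hX Y hY hXY
            rcases Finset.mem_insert.mp hX with hXA | hX' <;>
              rcases Finset.mem_insert.mp hY with hYA | hY'
            · exact absurd (hXA.trans hYA.symm) hXY
            · subst hXA; exact hdis Y hY'
            · subst hYA; exact (hdis X hX').symm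
            · exact hTdisj X hX' Y hY' hXY
        have := hTmax _ hmem
        rw [Finset.card_insert_of_notMem hAT] at this
        omega
      have hsubU : ∀ B ∈ T, B ⊆ U := fun B hB => Finset.le_sup (f := id) hB
      have hmeet : ∀ A ∈ 𝒜, A ≠ ∅ → (A ∩ U).Nonempty := by
        intro A hA hAne
        rw [Finset.nonempty_iff_ne_empty]
        intro hcon
        have hdisU : Disjoint A U := Finset.disjoint_iff_inter_eq_empty.mpr hcon
        have hAT : A ∉ T := by
          intro hin
          exact hAne (Finset.subset_empty.mp
            (by
              have := Finset.disjoint_left.mp hdisU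
              intro a ha
              exact absurd (hsubU A hin ha) (fun h => this ha h)))
        exact hmaxins A hA hAT (fun B hB => hdisU.mono_right (hsubU B hB))
      have hempT : ∅ ∈ 𝒜 → ∅ ∈ T := by
        intro h
        by_contra hnot
        exact hmaxins ∅ h hnot (fun B _ => Finset.disjoint_empty_left B)
      set T₁ := T.erase ∅ with hT₁
      have hUT₁ : U = T₁.sup id := by
        by_cases h : ∅ ∈ T
        · rw [hU, hT₁]
          conv_lhs => rw [← Finset.insert_erase h]
          rw [Finset.sup_insert]
          simp
        · rw [hT₁, Finset.erase_eq_of_notMem h]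
      have hUcard : U.card ≤ T₁.card * (d + 1) := by
        rw [hUT₁, Finset.sup_eq_biUnion]
        refine (Finset.card_biUnion_le).trans ?_
        refine (Finset.sum_le_card_nsmul T₁ _ (d+1) ?_).trans (le_of_eq (by simp [mul_comm]))
        intro B hB
        exact hsize B (hT𝒜 (Finset.mem_of_mem_erase hB))
      set 𝒜₁ := 𝒜.erase ∅ with h𝒜₁
      have hfact : Nat.factorial (d + 1) = (d + 1) * Nat.factorial d := Nat.factorial_succ d
      have hpow : k ^ (d + 1) = k * k ^ d := pow_succ' k d
      have hkd1 : 1 ≤ Nat.factorial d * k ^ d :=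
        Nat.one_le_iff_ne_zero.mpr (Nat.mul_ne_zero (Nat.factorial_ne_zero d)
          (pow_ne_zero d (by omega)))
      have hkey : U.card * (Nat.factorial d * k ^ d) < 𝒜₁.card := by
        by_cases h : ∅ ∈ 𝒜
        · have hempty : ∅ ∈ T := hempT h
          have hT₁c : T₁.card = T.card - 1 := Finset.card_erase_of_mem hempty
          have h𝒜₁c : 𝒜₁.card = 𝒜.card - 1 := Finset.card_erase_of_mem h
          have hTpos : 1 ≤ T.card := Finset.card_pos.mpr ⟨∅, hempty⟩
          have : U.card * (Nat.factorial d * k ^ d) ≤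
              (k - 1) * (d + 1) * (Nat.factorial d * k ^ d) := by
            have : U.card ≤ (k - 1) * (d + 1) :=
              hUcard.trans (Nat.mul_le_mul_right _ (by omega))
            exact Nat.mul_le_mul_right _ this
          refine lt_of_le_of_lt this ?_
          have heq : (k - 1) * (d + 1) * (Nat.factorial d * k ^ d)
              = Nat.factorial (d+1) * k ^ (d+1) - Nat.factorial (d+1) * k ^ d := by
            rw [hfact, hpow]
            obtain ⟨m, rfl⟩ := Nat.exists_eq_add_of_le hk
            simp only [Nat.add_sub_cancel_left]
            have hadd : (d + 1) * d.factorial * ((1 + m) * (1 + m) ^ d)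
                = (d + 1) * d.factorial * (1 + m) ^ d
                  + m * (d + 1) * (d.factorial * (1 + m) ^ d) := by ring
            omega
          rw [heq, h𝒜₁c]
          have h1 : 1 ≤ Nat.factorial (d+1) * k ^ d :=
            Nat.one_le_iff_ne_zero.mpr (Nat.mul_ne_zero (Nat.factorial_ne_zero _)
              (pow_ne_zero d (by omega)))
          have h2 : Nat.factorial (d+1) * k ^ d ≤ Nat.factorial (d+1) * k ^ (d+1) :=
            Nat.mul_le_mul_left _ (Nat.pow_le_pow_right hk (by omega))
          omega
        · have h𝒜₁c : 𝒜₁ = 𝒜 := Finset.erase_eq_of_notMem h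
          rw [h𝒜₁c]
          refine lt_of_le_of_lt ?_ hcard
          calc U.card * (Nat.factorial d * k ^ d)
              ≤ k * (d + 1) * (Nat.factorial d * k ^ d) := by
                refine Nat.mul_le_mul_right _ (hUcard.trans ?_)
                exact Nat.mul_le_mul_right _ ((Finset.card_erase_le).trans hTk)
            _ = Nat.factorial (d+1) * k ^ (d+1) := by rw [hfact, hpow]; ring
      -- pigeonhole
      have hsum1 : 𝒜₁.card ≤ ∑ A ∈ 𝒜₁, (A ∩ U).card := by
        rw [Finset.card_eq_sum_ones 𝒜₁]
        refine Finset.sum_le_sum ?_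
        intro A hA
        exact Finset.card_pos.mpr (hmeet A (Finset.mem_of_mem_erase hA)
          (Finset.ne_of_mem_erase hA))
      have hsum2 : ∑ A ∈ 𝒜₁, (A ∩ U).card
          = ∑ x ∈ U, (𝒜₁.filter (fun A => x ∈ A)).card := by
        have h1 : ∀ A : Finset V, (A ∩ U).card = ∑ x ∈ U, if x ∈ A then 1 else 0 := by
          intro A
          rw [← Finset.sum_filter, Finset.sum_const, smul_eq_mul, mul_one,
            Finset.filter_mem_eq_inter, Finset.inter_comm]
        simp only [h1, Finset.card_filter]
        exact Finset.sum_comm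
      have hlt : ∑ x ∈ U, (Nat.factorial d * k ^ d)
          < ∑ x ∈ U, (𝒜₁.filter (fun A => x ∈ A)).card := by
        rw [Finset.sum_const, smul_eq_mul]
        exact lt_of_lt_of_le (lt_of_lt_of_le hkey (hsum1.trans hsum2.le)) le_rfl
      obtain ⟨x, hxU, hx⟩ := Finset.exists_lt_of_sum_lt hlt
      set ℬ := 𝒜₁.filter (fun A => x ∈ A) with hℬ
      have hxmem : ∀ A ∈ ℬ, x ∈ A := fun A hA => (Finset.mem_filter.mp hA).2
      have hℬ𝒜 : ℬ ⊆ 𝒜 := fun A hA =>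
        Finset.mem_of_mem_erase (Finset.mem_filter.mp hA).1
      set ℬ' := ℬ.image (fun A => A.erase x) with hℬ'
      have hinj : Set.InjOn (fun A : Finset V => A.erase x) (ℬ : Set (Finset V)) := by
        intro A hA B hB hAB
        have hAB' : A.erase x = B.erase x := hAB
        have : insert x (A.erase x) = insert x (B.erase x) := by rw [hAB']
        rwa [Finset.insert_erase (hxmem A hA), Finset.insert_erase (hxmem B hB)] at this
      have hℬ'card : Nat.factorial d * k ^ d < ℬ'.card := by
        rw [hℬ', Finset.card_image_of_injOn hinj]
        exact hx
      have hℬ'size : ∀ B ∈ ℬ', B.card ≤ d := by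
        intro B hB
        obtain ⟨A, hA, rfl⟩ := Finset.mem_image.mp hB
        rw [Finset.card_erase_of_mem (hxmem A hA)]
        have := hsize A (hℬ𝒜 hA)
        omega
      obtain ⟨S', hS'ℬ', C, hS'card, hS'core⟩ := ih ℬ' hℬ'size hℬ'card
      have hxnot : ∀ B ∈ S', x ∉ B := by
        intro B hB
        obtain ⟨A, _, rfl⟩ := Finset.mem_image.mp (hS'ℬ' hB)
        exact Finset.notMem_erase x A
      refine ⟨S'.image (insert x), ?_, insert x C, ?_, ?_⟩
      · intro A hA
        obtain ⟨B, hB, rfl⟩ := Finset.mem_image.mp hA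
        obtain ⟨A', hA', rfl⟩ := Finset.mem_image.mp (hS'ℬ' hB)
        rw [Finset.insert_erase (hxmem A' hA')]
        exact hℬ𝒜 hA'
      · rw [Finset.card_image_of_injOn, hS'card]
        intro A hA B hB hAB
        have h1 : A = (insert x A).erase x := by
          rw [Finset.erase_insert (hxnot A hA)]
        have h2 : B = (insert x B).erase x := by
          rw [Finset.erase_insert (hxnot B hB)]
        rw [h1, h2, hAB]
      · intro A hA B hB hAB
        obtain ⟨A', hA', rfl⟩ := Finset.mem_image.mp hA
        obtain ⟨B', hB', rfl⟩ := Finset.mem_image.mp hB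
        have hne : A' ≠ B' := fun h => hAB (by rw [h])
        rw [← Finset.insert_inter_distrib, hS'core A' hA' B' hB' hne]

/-- Sunflower lemma: any family of more than `d! * k^d` distinct sets, each of size
at most `d`, contains a `(k+1)`-sunflower: `k+1` sets whose pairwise intersections
all equal a common set. -/
theorem stmt10 {V : Type*} [DecidableEq V] (d k : ℕ) (𝒜 : Finset (Finset V))
    (hsize : ∀ A ∈ 𝒜, A.card ≤ d)
    (hcard : Nat.factorial d * k ^ d < 𝒜.card) :
    ∃ S ⊆ 𝒜, ∃ C : Finset V, S.card = k + 1 ∧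
      ∀ A ∈ S, ∀ B ∈ S, A ≠ B → A ∩ B = C := by
  rcases Nat.eq_zero_or_pos k with rfl | hk
  · have hne : 𝒜.Nonempty := Finset.card_pos.mp (by omega)
    obtain ⟨A, hA⟩ := hne
    refine ⟨{A}, Finset.singleton_subset_iff.mpr hA, A, Finset.card_singleton A, ?_⟩
    intro X hX Y hY hXY
    rw [Finset.mem_singleton] at hX hY
    exact absurd (hX.trans hY.symm) hXY
  · exact sunflower_aux k hk d 𝒜 hsize hcard
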